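/- In the abstract discrete Biot setting with error sequences, there is a constant C > 0 depending only on γ_a, C_a and β_S (independent of κ, c₀, τ and N) such that for every 1 ≤ m ≤ N: ‖e_u^m‖_U + ‖e_p^m‖_Q ≤ C·( ‖e_u^0‖_U + c₀^{1/2}·‖e_p^0‖_Q + Σ_{j=1}^{N} τ·‖R^j‖_Q + (Σ_{j=1}^{N} (τ/κ)·‖ρ_z^j‖_{W0}²)^{1/2} ). -/

import Mathlib

open scoped RealInnerProductSpace
open Finset

lemma aux_sqrt_add_le (a b : ℝ) (ha : 0 ≤ a) (hb : 0 ≤ b) :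
    Real.sqrt (a+b) ≤ Real.sqrt a + Real.sqrt b := by
  calc Real.sqrt (a+b) ≤ Real.sqrt ((Real.sqrt a + Real.sqrt b)^2) := by
        apply Real.sqrt_le_sqrt
        nlinarith [Real.sq_sqrt ha, Real.sq_sqrt hb, Real.sqrt_nonneg a, Real.sqrt_nonneg b,
          mul_nonneg (Real.sqrt_nonneg a) (Real.sqrt_nonneg b)]
    _ = _ := Real.sqrt_sq (by positivity)

lemma aux_quad (x a b : ℝ) (ha : 0 ≤ a) (hb : 0 ≤ b)
    (h : x^2 ≤ a + b*x) : x ≤ Real.sqrt a + b := by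
  by_contra hc
  push_neg at hc
  nlinarith [Real.sq_sqrt ha, Real.sqrt_nonneg a]

lemma aux_quad' (x a b c : ℝ) (hc : 0 < c) (ha : 0 ≤ a) (hb : 0 ≤ b)
    (h : c*x^2 ≤ a + b*x) : x ≤ Real.sqrt (a/c) + b/c := by
  apply aux_quad x (a/c) (b/c) (by positivity) (by positivity)
  have he : a/c + b/c*x = (a + b*x)/c := by ring
  rw [he, le_div_iff₀ hc]
  linarith

set_option maxHeartbeats 3200000 in
/-- Displacement and pressure error estimate for minimally Stokes–Biot stable
Euler–Galerkin schemes: there is `C > 0` depending only on `γ_a, C_a, β_S` (independent of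
`κ, c₀, τ, N`) such that for `1 ≤ m ≤ N`,
`‖e_u^m‖_U + ‖e_p^m‖_Q ≤ C(‖e_u^0‖_U + c₀^{1/2}‖e_p^0‖_Q + Σ_j τ‖R^j‖_Q +
(Σ_j (τ/κ)‖ρ_z^j‖²)^{1/2})`. -/
theorem biot_displacement_pressure_error_estimate {U W Q : Type*}
    [NormedAddCommGroup U] [InnerProductSpace ℝ U] [FiniteDimensional ℝ U]
    [NormedAddCommGroup W] [InnerProductSpace ℝ W] [FiniteDimensional ℝ W]
    [NormedAddCommGroup Q] [InnerProductSpace ℝ Q] [FiniteDimensional ℝ Q]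
    (γa Ca βS : ℝ) (hγa : 0 < γa) (hCa : 0 < Ca) (hβS : 0 < βS) :
    ∃ C : ℝ, 0 < C ∧
      ∀ (τ κ c₀ Cb : ℝ), 0 < τ → 0 < κ → κ ≤ 1 → 0 ≤ c₀ → c₀ < 1 → 0 < Cb →
      ∀ (a : U →ₗ[ℝ] U →ₗ[ℝ] ℝ) (DU : U →ₗ[ℝ] Q) (DW : W →ₗ[ℝ] Q),
        (∀ u v : U, a u v = a v u) →
        (∀ u : U, γa * ‖u‖ ^ 2 ≤ a u u) →
        (∀ u v : U, |a u v| ≤ Ca * ‖u‖ * ‖v‖) →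
        (∀ v : U, ‖DU v‖ ≤ Cb * ‖v‖) →
        (∀ q : Q, βS * ‖q‖ ≤ ⨆ v : {v : U // v ≠ 0}, ⟪DU (v : U), q⟫ / ‖(v : U)‖) →
      ∀ (N : ℕ), 1 ≤ N →
      ∀ (eu : ℕ → U) (ez : ℕ → W) (ep : ℕ → Q) (ρz : ℕ → W) (R : ℕ → Q),
        (∀ m ≤ N, ∀ v : U, a (eu m) v + ⟪DU v, ep m⟫ = 0) →
        (∀ m ≤ N, ∀ w : W, κ⁻¹ * ⟪ez m, w⟫ + ⟪DW w, ep m⟫ = κ⁻¹ * ⟪ρz m, w⟫) →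
        (∀ m, 1 ≤ m → m ≤ N → ∀ q : Q,
          ⟪DU (τ⁻¹ • (eu m - eu (m - 1))), q⟫ + ⟪DW (ez m), q⟫
            - c₀ * ⟪τ⁻¹ • (ep m - ep (m - 1)), q⟫ = ⟪R m, q⟫) →
      ∀ m, 1 ≤ m → m ≤ N →
        ‖eu m‖ + ‖ep m‖ ≤
          C * (‖eu 0‖ + Real.sqrt c₀ * ‖ep 0‖ + (∑ j ∈ Icc 1 N, τ * ‖R j‖)
            + Real.sqrt (∑ j ∈ Icc 1 N, (τ / κ) * ‖ρz j‖ ^ 2)) := by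
  refine ⟨(1 + Ca/βS) * (Real.sqrt (Ca/γa) + Real.sqrt (1/γa) + 2*Ca/(βS*γa)
      + Real.sqrt (1/γa)), by positivity, ?_⟩
  intro τ κ c₀ Cb hτ hκ hκ1 hc₀ hc₀1 hCb a DU DW hsym hcoer habd hDU hinf
    N hN eu ez ep ρz R heq1 heq2 heq3 m hm1 hmN
  -- pressure bounded by displacement via inf-sup
  have hps : ∀ j, j ≤ N → ‖ep j‖ ≤ (Ca/βS) * ‖eu j‖ := by
    intro j hj
    have h1 := hinf (ep j)
    have h2 : (⨆ v : {v : U // v ≠ 0}, ⟪DU (v : U), ep j⟫ / ‖(v : U)‖) ≤ Ca * ‖eu j‖ := by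
      by_cases hne : Nonempty {v : U // v ≠ 0}
      · refine ciSup_le fun v => ?_
        have hv : (0:ℝ) < ‖(v : U)‖ := norm_pos_iff.mpr v.2
        have he := heq1 j hj (v : U)
        have hD : ⟪DU (v : U), ep j⟫ = - a (eu j) (v : U) := by linarith
        rw [hD, div_le_iff₀ hv]
        calc - a (eu j) (v : U) ≤ |a (eu j) (v : U)| := neg_le_abs _
          _ ≤ Ca * ‖eu j‖ * ‖(v : U)‖ := habd _ _
      · rw [not_nonempty_iff] at hne
        rw [Real.iSup_of_isEmpty]
        positivity
    have h3 := h1.trans h2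
    rw [div_mul_eq_mul_div, le_div_iff₀ hβS]
    nlinarith [norm_nonneg (ep j)]
  -- the energy
  set E : ℕ → ℝ := fun j => a (eu j) (eu j) + c₀ * ‖ep j‖^2 with hEdef
  have hEnn : ∀ j, 0 ≤ E j := by
    intro j
    have := hcoer (eu j)
    have h1 : (0:ℝ) ≤ γa * ‖eu j‖^2 := by positivity
    have h2 : (0:ℝ) ≤ c₀ * ‖ep j‖^2 := by positivity
    simp only [hEdef]
    linarith
  -- one-step energy estimate
  have hstep : ∀ j, 1 ≤ j → j ≤ N →
      E j ≤ E (j-1) + (τ/κ)*‖ρz j‖^2 + 2*τ*‖R j‖*‖ep j‖ := by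
    intro j hj1 hjN
    set d : U := eu j - eu (j-1) with hd
    have h3 := heq3 j hj1 hjN (ep j)
    rw [map_smul, real_inner_smul_left, real_inner_smul_left] at h3
    have h1 := heq1 j hjN d
    have h2 := heq2 j hjN (ez j)
    have e1 : ⟪DU d, ep j⟫ = - a (eu j) d := by linarith
    have e2 : ⟪DW (ez j), ep j⟫ = κ⁻¹ * ⟪ρz j, ez j⟫ - κ⁻¹ * ⟪ez j, ez j⟫ := by linarith
    rw [e1, e2] at h3
    have hττ : τ * τ⁻¹ = 1 := mul_inv_cancel₀ (ne_of_gt hτ)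
    have key : a (eu j) d + c₀ * ⟪ep j - ep (j-1), ep j⟫
        = τ * (κ⁻¹ * ⟪ρz j, ez j⟫ - κ⁻¹ * ⟪ez j, ez j⟫) - τ * ⟪R j, ep j⟫ := by
      linear_combination (-τ) * h3
        - (a (eu j) d + c₀ * ⟪ep j - ep (j-1), ep j⟫) * hττ
    -- coercivity identities
    have hdd : 0 ≤ a d d := le_trans (by positivity) (hcoer d)
    have hexp : a d d = a (eu j) (eu j) - a (eu j) (eu (j-1))
        - a (eu (j-1)) (eu j) + a (eu (j-1)) (eu (j-1)) := by
      simp only [hd, map_sub, LinearMap.sub_apply]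
      ring
    have hsplit : a (eu j) d = a (eu j) (eu j) - a (eu j) (eu (j-1)) := by
      simp only [hd, map_sub]
    have ha1 : a (eu j) (eu j) - a (eu (j-1)) (eu (j-1)) ≤ 2 * a (eu j) d := by
      have := hsym (eu (j-1)) (eu j)
      linarith
    have hp1 : ‖ep j‖^2 - ‖ep (j-1)‖^2 ≤ 2 * ⟪ep j - ep (j-1), ep j⟫ := by
      have e3 : ⟪ep j - ep (j-1), ep j⟫ = ⟪ep j, ep j⟫ - ⟪ep (j-1), ep j⟫ :=
        inner_sub_left _ _ _
      have e4 : ⟪ep j, ep j⟫ = ‖ep j‖^2 := real_inner_self_eq_norm_sq _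
      have e5 : ⟪ep (j-1), ep j⟫ = ⟪ep j, ep (j-1)⟫ := real_inner_comm _ _
      have e6 := norm_sub_sq_real (ep j) (ep (j-1))
      have e7 := sq_nonneg ‖ep j - ep (j-1)‖
      linarith
    -- bounds on the right-hand side
    have hr : ⟪ρz j, ez j⟫ - ⟪ez j, ez j⟫ ≤ ‖ρz j‖^2/2 := by
      have := real_inner_le_norm (ρz j) (ez j)
      have hez : ⟪ez j, ez j⟫ = ‖ez j‖^2 := real_inner_self_eq_norm_sq _
      nlinarith [sq_nonneg (‖ρz j‖ - 2*‖ez j‖), sq_nonneg ‖ρz j‖]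
    have hRR : -⟪R j, ep j⟫ ≤ ‖R j‖ * ‖ep j‖ := by
      have := abs_real_inner_le_norm (R j) (ep j)
      have := neg_abs_le ⟪R j, ep j⟫
      linarith
    have hτκ : (0:ℝ) < τ * κ⁻¹ := by positivity
    have hfin : 2 * (a (eu j) d + c₀ * ⟪ep j - ep (j-1), ep j⟫)
        ≤ (τ/κ)*‖ρz j‖^2 + 2*τ*‖R j‖*‖ep j‖ := by
      rw [key]
      have hh1 := mul_le_mul_of_nonneg_left hr hτκ.le
      have hh2 := mul_le_mul_of_nonneg_left hRR hτ.le
      have hdiv : τ/κ = τ * κ⁻¹ := div_eq_mul_inv τ κ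
      rw [hdiv]
      linarith [hh1, hh2]
    have hc1 := mul_le_mul_of_nonneg_left hp1 hc₀
    simp only [hEdef]
    linarith
  -- cumulative estimate
  have hcum : ∀ m', m' ≤ N → E m' ≤ E 0
      + ∑ j ∈ Icc 1 m', ((τ/κ)*‖ρz j‖^2 + 2*τ*‖R j‖*‖ep j‖) := by
    intro m'
    induction m' with
    | zero => intro _; simp
    | succ k ih =>
      intro hk
      have hk' : k ≤ N := by omega
      have hs := hstep (k+1) (by omega) hk
      rw [Finset.sum_Icc_succ_top (by omega : 1 ≤ k+1)]
      simp only [Nat.add_sub_cancel] at hs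
      linarith [ih hk']
  -- the max of displacement errors
  have h0mem : (0:ℕ) ∈ Icc 0 N := by simp
  set G : ℝ := (Icc 0 N).sup' ⟨0, h0mem⟩ (fun j => ‖eu j‖) with hGdef
  have hG : ∀ j, j ≤ N → ‖eu j‖ ≤ G := by
    intro j hj
    have hjm : j ∈ Icc 0 N := Finset.mem_Icc.mpr ⟨Nat.zero_le j, hj⟩
    exact Finset.le_sup' (fun i => ‖eu i‖) hjm
  have hG0 : 0 ≤ G := le_trans (norm_nonneg _) (hG 0 (by omega))
  set T1 : ℝ := ‖eu 0‖ with hT1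
  set T2 : ℝ := Real.sqrt c₀ * ‖ep 0‖ with hT2
  set T3 : ℝ := ∑ j ∈ Icc 1 N, τ * ‖R j‖ with hT3
  set Sρ : ℝ := ∑ j ∈ Icc 1 N, (τ/κ) * ‖ρz j‖^2 with hSρ
  set T4 : ℝ := Real.sqrt Sρ with hT4
  have hT1n : 0 ≤ T1 := norm_nonneg _
  have hT2n : 0 ≤ T2 := mul_nonneg (Real.sqrt_nonneg _) (norm_nonneg _)
  have hT3n : 0 ≤ T3 := Finset.sum_nonneg fun j _ => by positivity
  have hSρn : 0 ≤ Sρ := Finset.sum_nonneg fun j _ => by positivity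
  have hT4n : 0 ≤ T4 := Real.sqrt_nonneg _
  -- global energy bound
  have hglob : ∀ m', m' ≤ N → E m' ≤ E 0 + Sρ + 2*(Ca/βS)*T3*G := by
    intro m' hm'
    have h1 := hcum m' hm'
    have h2 : ∑ j ∈ Icc 1 m', ((τ/κ)*‖ρz j‖^2 + 2*τ*‖R j‖*‖ep j‖)
        ≤ ∑ j ∈ Icc 1 N, ((τ/κ)*‖ρz j‖^2 + 2*τ*‖R j‖*‖ep j‖) := by
      apply Finset.sum_le_sum_of_subset_of_nonneg (Finset.Icc_subset_Icc_right hm')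
      intro j _ _
      positivity
    have h3 : ∑ j ∈ Icc 1 N, ((τ/κ)*‖ρz j‖^2 + 2*τ*‖R j‖*‖ep j‖)
        ≤ Sρ + 2*(Ca/βS)*T3*G := by
      rw [Finset.sum_add_distrib, hSρ]
      have h4 : ∑ j ∈ Icc 1 N, 2*τ*‖R j‖*‖ep j‖
          ≤ ∑ j ∈ Icc 1 N, (2*(Ca/βS)*G) * (τ*‖R j‖) := by
        apply Finset.sum_le_sum
        intro j hj
        have hj' : j ≤ N := (Finset.mem_Icc.mp hj).2
        have hp := (hps j hj').trans
          (mul_le_mul_of_nonneg_left (hG j hj') (by positivity))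
        have hf : (0:ℝ) ≤ 2*τ*‖R j‖ := by positivity
        nlinarith [mul_le_mul_of_nonneg_left hp hf]
      have h5 : ∑ j ∈ Icc 1 N, (2*(Ca/βS)*G) * (τ*‖R j‖) = 2*(Ca/βS)*T3*G := by
        rw [hT3, ← Finset.mul_sum]
        ring
      linarith
    linarith
  -- bound on G via the quadratic inequality
  have hGbound : G ≤ Real.sqrt ((E 0 + Sρ)/γa) + (2*(Ca/βS)*T3)/γa := by
    obtain ⟨j0, hj0mem, hj0eq⟩ := Finset.exists_mem_eq_sup' ⟨0, h0mem⟩ (fun j => ‖eu j‖)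
    have hj0N : j0 ≤ N := (Finset.mem_Icc.mp hj0mem).2
    have hq : γa * G^2 ≤ (E 0 + Sρ) + (2*(Ca/βS)*T3)*G := by
      have hc := hcoer (eu j0)
      have hEj := hglob j0 hj0N
      have hEc : γa * ‖eu j0‖^2 ≤ E j0 := by
        simp only [hEdef]
        have : (0:ℝ) ≤ c₀ * ‖ep j0‖^2 := by positivity
        linarith
      have hGeq : G = ‖eu j0‖ := hGdef.trans hj0eq
      rw [hGeq] at hEj ⊢
      calc γa * ‖eu j0‖^2 ≤ E j0 := hEc
        _ ≤ E 0 + Sρ + 2 * (Ca / βS) * T3 * ‖eu j0‖ := hEj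
        _ = (E 0 + Sρ) + (2*(Ca/βS)*T3)*‖eu j0‖ := by ring
    exact aux_quad' G (E 0 + Sρ) (2*(Ca/βS)*T3) γa hγa
      (add_nonneg (hEnn 0) hSρn) (by positivity) hq
  -- bound the sqrt term
  have hE0 : E 0 ≤ Ca * T1^2 + c₀ * ‖ep 0‖^2 := by
    simp only [hEdef, hT1]
    have h1 : a (eu 0) (eu 0) ≤ |a (eu 0) (eu 0)| := le_abs_self _
    have h2 := habd (eu 0) (eu 0)
    nlinarith
  have hsq1 : Real.sqrt ((E 0 + Sρ)/γa)
      ≤ Real.sqrt (Ca/γa) * T1 + Real.sqrt (1/γa) * T2 + Real.sqrt (1/γa) * T4 := by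
    have step1 : (E 0 + Sρ)/γa = E 0/γa + Sρ/γa := add_div _ _ _
    have step2 : Real.sqrt ((E 0 + Sρ)/γa) ≤ Real.sqrt (E 0/γa) + Real.sqrt (Sρ/γa) := by
      rw [step1]
      exact aux_sqrt_add_le _ _ (div_nonneg (hEnn 0) hγa.le) (div_nonneg hSρn hγa.le)
    have step3 : Real.sqrt (E 0/γa)
        ≤ Real.sqrt ((Ca/γa)*T1^2) + Real.sqrt (((1:ℝ)/γa)*(c₀ * ‖ep 0‖^2)) := by
      have h1 : E 0/γa ≤ (Ca/γa)*T1^2 + ((1:ℝ)/γa)*(c₀ * ‖ep 0‖^2) := by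
        rw [div_le_iff₀ hγa]
        have he : ((Ca/γa)*T1^2 + ((1:ℝ)/γa)*(c₀ * ‖ep 0‖^2))*γa
            = Ca*T1^2 + c₀*‖ep 0‖^2 := by field_simp
        rw [he]
        exact hE0
      calc Real.sqrt (E 0/γa) ≤ Real.sqrt ((Ca/γa)*T1^2 + ((1:ℝ)/γa)*(c₀ * ‖ep 0‖^2)) :=
            Real.sqrt_le_sqrt h1
        _ ≤ _ := aux_sqrt_add_le _ _ (by positivity) (by positivity)
    have step4 : Real.sqrt ((Ca/γa)*T1^2) = Real.sqrt (Ca/γa) * T1 := by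
      rw [Real.sqrt_mul (by positivity), Real.sqrt_sq hT1n]
    have step5 : Real.sqrt (((1:ℝ)/γa)*(c₀ * ‖ep 0‖^2)) = Real.sqrt (1/γa) * T2 := by
      rw [Real.sqrt_mul (by positivity), hT2]
      congr 1
      rw [Real.sqrt_mul hc₀, Real.sqrt_sq (norm_nonneg _)]
    have step6 : Real.sqrt (Sρ/γa) = Real.sqrt (1/γa) * T4 := by
      rw [hT4, div_eq_mul_inv, mul_comm Sρ, ← one_div,
        Real.sqrt_mul (by positivity)]
    rw [step4, step5] at step3
    rw [step6] at step2
    linarith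
  -- finish
  have hfinal : ‖eu m‖ + ‖ep m‖ ≤ (1 + Ca/βS) * G := by
    have h1 := hps m hmN
    have h2 := hG m hmN
    have h3 : ‖ep m‖ ≤ (Ca/βS) * G := h1.trans
      (mul_le_mul_of_nonneg_left h2 (by positivity))
    nlinarith
  have hGfin : G ≤ Real.sqrt (Ca/γa) * T1 + Real.sqrt (1/γa) * T2
      + (2*Ca/(βS*γa)) * T3 + Real.sqrt (1/γa) * T4 := by
    have heq : (2*(Ca/βS)*T3)/γa = (2*Ca/(βS*γa)) * T3 := by ring
    rw [heq] at hGbound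
    linarith
  have hc1 : (0:ℝ) ≤ Real.sqrt (Ca/γa) := Real.sqrt_nonneg _
  have hc2 : (0:ℝ) ≤ Real.sqrt (1/γa) := Real.sqrt_nonneg _
  have hc3 : (0:ℝ) ≤ 2*Ca/(βS*γa) := by positivity
  have hS : G ≤ (Real.sqrt (Ca/γa) + Real.sqrt (1/γa) + 2*Ca/(βS*γa) + Real.sqrt (1/γa))
      * (T1 + T2 + T3 + T4) := by
    have b1 : Real.sqrt (Ca/γa) * T1 ≤ Real.sqrt (Ca/γa) * (T1 + T2 + T3 + T4) :=
      mul_le_mul_of_nonneg_left (by linarith) hc1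
    have b2 : Real.sqrt (1/γa) * T2 ≤ Real.sqrt (1/γa) * (T1 + T2 + T3 + T4) :=
      mul_le_mul_of_nonneg_left (by linarith) hc2
    have b3 : (2*Ca/(βS*γa)) * T3 ≤ (2*Ca/(βS*γa)) * (T1 + T2 + T3 + T4) :=
      mul_le_mul_of_nonneg_left (by linarith) hc3
    have b4 : Real.sqrt (1/γa) * T4 ≤ Real.sqrt (1/γa) * (T1 + T2 + T3 + T4) :=
      mul_le_mul_of_nonneg_left (by linarith) hc2
    nlinarith
  have hk : (0:ℝ) < 1 + Ca/βS := by positivity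
  calc ‖eu m‖ + ‖ep m‖ ≤ (1 + Ca/βS) * G := hfinal
    _ ≤ (1 + Ca/βS) * ((Real.sqrt (Ca/γa) + Real.sqrt (1/γa) + 2*Ca/(βS*γa)
        + Real.sqrt (1/γa)) * (T1 + T2 + T3 + T4)) :=
      mul_le_mul_of_nonneg_left hS hk.le
    _ = (1 + Ca/βS) * (Real.sqrt (Ca/γa) + Real.sqrt (1/γa) + 2*Ca/(βS*γa)
        + Real.sqrt (1/γa)) * (T1 + T2 + T3 + T4) := by ring
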